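/- Let ℓ ≥ 1 and let n₁,…,n_ℓ ≥ 1 be positive integers with n := n₁ + ⋯ + n_ℓ. Then there exists a polynomial map f : ℝ^n → ℝ^n whose image of B̄_n is the product of closed unit balls B̄_{n₁} × ⋯ × B̄_{n_ℓ} ⊆ ℝ^n, i.e. the set of x ∈ ℝ^n such that for each i the sum of the squares of the coordinates of x in the i-th block of nᵢ coordinates is at most 1. -/

import Mathlib

/-- A map between Euclidean spaces is a *polynomial map* if each of its components
is given by the evaluation of a real multivariate polynomial. -/
def IsPolynomialMap {σ τ : Type} (f : EuclideanSpace ℝ σ → EuclideanSpace ℝ τ) : Prop :=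
  ∃ p : τ → MvPolynomial σ ℝ, ∀ x i, f x i = MvPolynomial.eval (fun j => x j) (p i)

namespace ProdBallsAux

open MvPolynomial Metric

/-- The odd polynomial `h(r) = r(3-4r²) = -T₃(r)`. -/
noncomputable def h (r : ℝ) : ℝ := r * (3 - 4 * r ^ 2)

lemma h_cont : Continuous h := by unfold h; fun_prop

lemma h_zero : h 0 = 0 := by simp [h]

lemma abs_h_le {r : ℝ} (hr : |r| ≤ 1) : |h r| ≤ 1 := by
  rw [← sq_le_one_iff_abs_le_one] at hr ⊢
  unfold h
  nlinarith [mul_nonneg (sub_nonneg.mpr hr) (sq_nonneg (4 * r ^ 2 - 1)), sq_nonneg r]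

lemma abs_h_iter_le (k : ℕ) : ∀ r : ℝ, |r| ≤ 1 → |h^[k] r| ≤ 1 := by
  induction k with
  | zero => intro r hr; simpa using hr
  | succ k ih =>
    intro r hr
    rw [Function.iterate_succ_apply]
    exact ih _ (abs_h_le hr)

lemma h_ge {r : ℝ} (h0 : 0 ≤ r) (h2 : r ≤ 1 / 2) : 2 * r ≤ h r := by
  unfold h; nlinarith

/-- There is a point `r ≤ 2⁻⁽ᵏ⁺¹⁾` where the `(k+1)`-fold iterate of `h` equals 1. -/
lemma exists_root (k : ℕ) :
    ∃ r : ℝ, 0 ≤ r ∧ r ≤ (1 / 2) ^ (k + 1) ∧ h^[k + 1] r = 1 := by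
  induction k with
  | zero =>
    refine ⟨1 / 2, by norm_num, by norm_num, ?_⟩
    rw [Function.iterate_one]; unfold h; norm_num
  | succ k ih =>
    obtain ⟨r, hr0, hrle, hr1⟩ := ih
    have hrhalf : r ≤ 1 / 2 := by
      refine hrle.trans ?_
      calc ((1:ℝ)/2) ^ (k+1) ≤ (1/2) ^ 1 := by
            apply pow_le_pow_of_le_one (by norm_num) (by norm_num) (by omega)
        _ = 1/2 := by norm_num
    have hmem : r ∈ Set.Icc (h 0) (h r) := by
      constructor
      · rw [h_zero]; exact hr0
      · exact le_trans (by linarith) (h_ge hr0 hrhalf)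
    obtain ⟨s, hs, hsr⟩ := intermediate_value_Icc hr0 h_cont.continuousOn hmem
    refine ⟨s, hs.1, ?_, ?_⟩
    · have h2s : 2 * s ≤ r := by
        rw [← hsr]; exact h_ge hs.1 (hs.2.trans hrhalf)
      have : s ≤ r / 2 := by linarith
      calc s ≤ r / 2 := this
        _ ≤ (1/2) ^ (k+1) / 2 := by linarith
        _ = (1/2) ^ (k+2) := by ring
    · rw [Function.iterate_succ_apply, hsr, hr1]

lemma exists_preimage (k : ℕ) {rk s : ℝ} (hrk : 0 ≤ rk) (h1 : h^[k] rk = 1)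
    (hs0 : 0 ≤ s) (hs1 : s ≤ 1) : ∃ r : ℝ, 0 ≤ r ∧ r ≤ rk ∧ h^[k] r = s := by
  have hfix : h^[k] 0 = 0 := Function.iterate_fixed h_zero k
  have hmem : s ∈ Set.Icc (h^[k] 0) (h^[k] rk) := by
    rw [hfix, h1]; exact ⟨hs0, hs1⟩
  obtain ⟨r, hr, hrs⟩ :=
    intermediate_value_Icc hrk (h_cont.iterate k).continuousOn hmem
  exact ⟨r, hr.1, hr.2, hrs⟩

lemma eval_bind₁ {σ : Type} (x : σ → ℝ) (g : σ → MvPolynomial σ ℝ) (φ : MvPolynomial σ ℝ) :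
    eval x (bind₁ g φ) = eval (fun i => eval x (g i)) φ :=
  eval₂Hom_bind₁ (RingHom.id ℝ) x g φ

lemma isPolynomialMap_iterate {σ : Type} {f : EuclideanSpace ℝ σ → EuclideanSpace ℝ σ}
    (hf : IsPolynomialMap f) (k : ℕ) : IsPolynomialMap f^[k] := by
  induction k with
  | zero => exact ⟨fun i => X i, fun x i => by simp⟩
  | succ k ih =>
    obtain ⟨p, hp⟩ := hf
    obtain ⟨q, hq⟩ := ih
    refine ⟨fun i => bind₁ p (q i), fun x i => ?_⟩
    rw [Function.iterate_succ_apply, eval_bind₁]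
    rw [hq (f x) i]
    have : (fun j => f x j) = fun j => MvPolynomial.eval (fun j' => x j') (p j) :=
      funext fun j => hp x j
    rw [this]

variable {ℓ : ℕ} {N : Fin ℓ → ℕ}

/-- The basic blockwise map. -/
noncomputable def F (N : Fin ℓ → ℕ)
    (x : EuclideanSpace ℝ ((i : Fin ℓ) × Fin (N i))) :
    EuclideanSpace ℝ ((i : Fin ℓ) × Fin (N i)) :=
  WithLp.toLp 2 (fun t => x t * (3 - 4 * ∑ j : Fin (N t.1), (x ⟨t.1, j⟩) ^ 2))

lemma isPolynomialMap_F (N : Fin ℓ → ℕ) : IsPolynomialMap (F N) := by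
  refine ⟨fun t => X t * (C 3 - C 4 * ∑ j : Fin (N t.1), (X (⟨t.1, j⟩ : (i : Fin ℓ) × Fin (N i))) ^ 2),
    fun x t => ?_⟩
  simp [F, eval_sum]

lemma blockScale (N : Fin ℓ → ℕ) (k : ℕ) :
    ∀ (x : EuclideanSpace ℝ ((i : Fin ℓ) × Fin (N i))) (i : Fin ℓ) (t : ℝ)
      (u : Fin (N i) → ℝ), (∑ j, u j ^ 2 = 1) → (∀ j, x ⟨i, j⟩ = t * u j) →
      ∀ j, (F N)^[k] x ⟨i, j⟩ = h^[k] t * u j := by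
  induction k with
  | zero => intro x i t u _ hx j; simpa using hx j
  | succ k ih =>
    intro x i t u hu hx j
    rw [Function.iterate_succ_apply, Function.iterate_succ_apply]
    refine ih (F N x) i (h t) u hu ?_ j
    intro j'
    have hS : ∑ j'' : Fin (N i), (x ⟨i, j''⟩) ^ 2 = t ^ 2 := by
      calc ∑ j'' : Fin (N i), (x ⟨i, j''⟩) ^ 2
          = ∑ j'' : Fin (N i), t ^ 2 * u j'' ^ 2 := by
            apply Finset.sum_congr rfl; intro j'' _; rw [hx j'']; ring
        _ = t ^ 2 * ∑ j'' : Fin (N i), u j'' ^ 2 := by rw [Finset.mul_sum]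
        _ = t ^ 2 := by rw [hu, mul_one]
    show x ⟨i, j'⟩ * (3 - 4 * ∑ j'' : Fin (N i), (x ⟨i, j''⟩) ^ 2) = h t * u j'
    rw [hS, hx j']
    unfold h; ring

/-- Normalization of a nonzero-length vector. -/
lemma normalize {m : ℕ} (hm : 1 ≤ m) (v : Fin m → ℝ) :
    ∃ u : Fin m → ℝ, (∑ j, u j ^ 2 = 1) ∧
      ∀ j, v j = Real.sqrt (∑ j, v j ^ 2) * u j := by
  have hsum : (0:ℝ) ≤ ∑ j, v j ^ 2 := Finset.sum_nonneg fun j _ => sq_nonneg _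
  set s := Real.sqrt (∑ j, v j ^ 2) with hs_def
  by_cases hs : s = 0
  · have hzero : ∑ j, v j ^ 2 = 0 := by
      rwa [hs_def, Real.sqrt_eq_zero hsum] at hs
    have hv : ∀ j, v j = 0 := by
      intro j
      have := (Finset.sum_eq_zero_iff_of_nonneg
        (fun j _ => sq_nonneg (v j))).mp hzero j (Finset.mem_univ j)
      exact pow_eq_zero_iff (n := 2) (by norm_num) |>.mp this
    refine ⟨fun j => if j = ⟨0, hm⟩ then 1 else 0, ?_, ?_⟩
    · simp
    · intro j; rw [hv j, hs, zero_mul]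
  · have hs0 : 0 < s := (Real.sqrt_nonneg _).lt_of_ne (Ne.symm hs)
    have hs2 : s ^ 2 = ∑ j, v j ^ 2 := Real.sq_sqrt hsum
    refine ⟨fun j => v j / s, ?_, ?_⟩
    · rw [show ∑ j, (v j / s) ^ 2 = (∑ j, v j ^ 2) / s ^ 2 by
        rw [Finset.sum_div]; apply Finset.sum_congr rfl; intro j _; ring]
      rw [← hs2, div_self (by positivity)]
    · intro j; field_simp

end ProdBallsAux

/-- A product of closed unit balls `B̄_{n₁} × ⋯ × B̄_{n_ℓ} ⊆ ℝⁿ` (where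
`n = n₁ + ⋯ + n_ℓ`, the coordinates of `ℝⁿ` being grouped into blocks of sizes
`n₁, …, n_ℓ`) is the image of the closed unit ball `B̄ₙ` under a polynomial map
`ℝⁿ → ℝⁿ`. -/
theorem product_of_balls_is_poly_image_ball (ℓ : ℕ) (hℓ : 1 ≤ ℓ)
    (N : Fin ℓ → ℕ) (hN : ∀ i, 1 ≤ N i) :
    ∃ f : EuclideanSpace ℝ ((i : Fin ℓ) × Fin (N i)) →
            EuclideanSpace ℝ ((i : Fin ℓ) × Fin (N i)),
      IsPolynomialMap f ∧
      f '' Metric.closedBall 0 1 =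
        {x : EuclideanSpace ℝ ((i : Fin ℓ) × Fin (N i)) |
          ∀ i : Fin ℓ, ∑ j : Fin (N i), (x ⟨i, j⟩) ^ 2 ≤ 1} := by
  classical
  open ProdBallsAux in
  obtain ⟨r₀, hr₀0, hr₀le, hr₀1⟩ := ProdBallsAux.exists_root ℓ
  set K := ℓ + 1 with hK
  set E := EuclideanSpace ℝ ((i : Fin ℓ) × Fin (N i))
  -- membership in the ball
  have ball_iff : ∀ x : E, x ∈ Metric.closedBall (0 : E) 1 ↔
      ∑ t : (i : Fin ℓ) × Fin (N i), (x t) ^ 2 ≤ 1 := by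
    intro x
    rw [mem_closedBall_zero_iff, EuclideanSpace.norm_eq]
    have hnorms : ∑ t : (i : Fin ℓ) × Fin (N i), ‖x t‖ ^ 2
        = ∑ t : (i : Fin ℓ) × Fin (N i), (x t) ^ 2 := by
      apply Finset.sum_congr rfl; intro t _; rw [Real.norm_eq_abs, sq_abs]
    rw [hnorms]
    have hsum : (0:ℝ) ≤ ∑ t : (i : Fin ℓ) × Fin (N i), (x t) ^ 2 :=
      Finset.sum_nonneg fun t _ => sq_nonneg _
    constructor
    · intro hx
      nlinarith [Real.sq_sqrt hsum, Real.sqrt_nonneg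
        (∑ t : (i : Fin ℓ) × Fin (N i), (x t) ^ 2)]
    · intro hx
      calc Real.sqrt (∑ t : (i : Fin ℓ) × Fin (N i), (x t) ^ 2)
          ≤ Real.sqrt 1 := Real.sqrt_le_sqrt hx
        _ = 1 := Real.sqrt_one
  -- the sigma sum splits into blocks
  have sum_split : ∀ x : E, ∑ t : (i : Fin ℓ) × Fin (N i), (x t) ^ 2
      = ∑ i : Fin ℓ, ∑ j : Fin (N i), (x ⟨i, j⟩) ^ 2 := by
    intro x
    rw [← Finset.univ_sigma_univ, Finset.sum_sigma]
  refine ⟨(ProdBallsAux.F N)^[K], ProdBallsAux.isPolynomialMap_iterate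
    (ProdBallsAux.isPolynomialMap_F N) K, ?_⟩
  ext y
  simp only [Set.mem_image, Set.mem_setOf_eq]
  constructor
  · rintro ⟨x, hx, rfl⟩ i
    obtain ⟨u, hu, hxu⟩ := ProdBallsAux.normalize (hN i) (fun j => x ⟨i, j⟩)
    set t := Real.sqrt (∑ j : Fin (N i), (x ⟨i, j⟩) ^ 2) with ht
    have hblock := ProdBallsAux.blockScale N K x i t u hu hxu
    have hxt : ∑ j : Fin (N i), ((ProdBallsAux.F N)^[K] x ⟨i, j⟩) ^ 2
        = (ProdBallsAux.h^[K] t) ^ 2 := by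
      calc ∑ j : Fin (N i), ((ProdBallsAux.F N)^[K] x ⟨i, j⟩) ^ 2
          = ∑ j : Fin (N i), (ProdBallsAux.h^[K] t) ^ 2 * u j ^ 2 := by
            apply Finset.sum_congr rfl; intro j _; rw [hblock j]; ring
        _ = (ProdBallsAux.h^[K] t) ^ 2 * ∑ j : Fin (N i), u j ^ 2 := by
            rw [Finset.mul_sum]
        _ = (ProdBallsAux.h^[K] t) ^ 2 := by rw [hu, mul_one]
    rw [hxt]
    -- t ≤ 1
    have hsum_le : ∑ j : Fin (N i), (x ⟨i, j⟩) ^ 2 ≤ 1 := by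
      have h1 : ∑ j : Fin (N i), (x ⟨i, j⟩) ^ 2
          ≤ ∑ i' : Fin ℓ, ∑ j : Fin (N i'), (x ⟨i', j⟩) ^ 2 :=
        Finset.single_le_sum (f := fun i' => ∑ j : Fin (N i'), (x ⟨i', j⟩) ^ 2)
          (fun i' _ => Finset.sum_nonneg fun j _ => sq_nonneg _) (Finset.mem_univ i)
      have h2 := (ball_iff x).mp hx
      rw [sum_split x] at h2
      linarith
    have ht1 : |t| ≤ 1 := by
      rw [ht, abs_of_nonneg (Real.sqrt_nonneg _)]
      calc Real.sqrt (∑ j : Fin (N i), (x ⟨i, j⟩) ^ 2) ≤ Real.sqrt 1 :=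
            Real.sqrt_le_sqrt hsum_le
        _ = 1 := Real.sqrt_one
    have := ProdBallsAux.abs_h_iter_le K t ht1
    nlinarith [this, abs_nonneg (ProdBallsAux.h^[K] t), sq_abs (ProdBallsAux.h^[K] t)]
  · intro hy
    -- choose data for each block
    have hchoice : ∀ i : Fin ℓ, ∃ ru : ℝ × (Fin (N i) → ℝ),
        0 ≤ ru.1 ∧ ru.1 ≤ r₀ ∧ (∑ j, ru.2 j ^ 2 = 1) ∧
        ∀ j, y ⟨i, j⟩ = ProdBallsAux.h^[K] ru.1 * ru.2 j := by
      intro i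
      obtain ⟨u, hu, hyu⟩ := ProdBallsAux.normalize (hN i) (fun j => y ⟨i, j⟩)
      set s := Real.sqrt (∑ j : Fin (N i), (y ⟨i, j⟩) ^ 2) with hs
      have hs0 : 0 ≤ s := Real.sqrt_nonneg _
      have hs1 : s ≤ 1 := by
        rw [hs]
        calc Real.sqrt (∑ j : Fin (N i), (y ⟨i, j⟩) ^ 2) ≤ Real.sqrt 1 :=
              Real.sqrt_le_sqrt (hy i)
          _ = 1 := Real.sqrt_one
      obtain ⟨r, hr0, hrle, hrs⟩ :=
        ProdBallsAux.exists_preimage K hr₀0 hr₀1 hs0 hs1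
      exact ⟨(r, u), hr0, hrle, hu, fun j => by rw [hyu j, hrs]⟩
    choose ru hru0 hrule hruu hruy using hchoice
    set x : E := WithLp.toLp 2 (fun t => (ru t.1).1 * (ru t.1).2 t.2 : ((i : Fin ℓ) × Fin (N i)) → ℝ) with hx
    refine ⟨x, ?_, ?_⟩
    · rw [ball_iff x, sum_split x]
      have hblocksum : ∀ i : Fin ℓ, ∑ j : Fin (N i), (x ⟨i, j⟩) ^ 2 = (ru i).1 ^ 2 := by
        intro i
        calc ∑ j : Fin (N i), (x ⟨i, j⟩) ^ 2
            = ∑ j : Fin (N i), (ru i).1 ^ 2 * (ru i).2 j ^ 2 := by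
              apply Finset.sum_congr rfl; intro j _; rw [hx]; ring
          _ = (ru i).1 ^ 2 * ∑ j : Fin (N i), (ru i).2 j ^ 2 := by rw [Finset.mul_sum]
          _ = (ru i).1 ^ 2 := by rw [hruu, mul_one]
      calc ∑ i : Fin ℓ, ∑ j : Fin (N i), (x ⟨i, j⟩) ^ 2
          = ∑ i : Fin ℓ, (ru i).1 ^ 2 := Finset.sum_congr rfl fun i _ => hblocksum i
        _ ≤ ∑ _i : Fin ℓ, r₀ ^ 2 := by
            apply Finset.sum_le_sum
            intro i _
            exact pow_le_pow_left₀ (hru0 i) (hrule i) 2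
        _ = (ℓ : ℝ) * r₀ ^ 2 := by rw [Finset.sum_const, Finset.card_univ,
            Fintype.card_fin, nsmul_eq_mul]
        _ ≤ 1 := by
            have hℓpow : (ℓ : ℝ) ≤ 4 ^ (ℓ + 1) := by
              calc (ℓ : ℝ) ≤ (2:ℝ) ^ ℓ := by
                    exact_mod_cast (Nat.lt_two_pow_self (n := ℓ)).le
                _ ≤ (4:ℝ) ^ (ℓ + 1) := by
                    calc (2:ℝ) ^ ℓ ≤ (4:ℝ) ^ ℓ :=
                          pow_le_pow_left₀ (by norm_num) (by norm_num) ℓ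
                      _ ≤ (4:ℝ) ^ (ℓ + 1) :=
                          pow_le_pow_right₀ (by norm_num) (by omega)
            have hr₀sq : r₀ ^ 2 ≤ ((1:ℝ)/2) ^ (ℓ+1) * ((1:ℝ)/2) ^ (ℓ+1) := by
              rw [sq]; exact mul_le_mul hr₀le hr₀le hr₀0 (by positivity)
            have hq : ((1:ℝ)/2) ^ (ℓ+1) * ((1:ℝ)/2) ^ (ℓ+1) = 1 / 4 ^ (ℓ+1) := by
              rw [← mul_pow]
              norm_num [div_pow]
            have h4pos : (0:ℝ) < 4 ^ (ℓ+1) := by positivity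
            rw [hq] at hr₀sq
            calc (ℓ : ℝ) * r₀ ^ 2 ≤ (ℓ : ℝ) * (1 / 4 ^ (ℓ+1)) := by
                  apply mul_le_mul_of_nonneg_left hr₀sq (by positivity)
              _ = (ℓ : ℝ) / 4 ^ (ℓ+1) := by ring
              _ ≤ 1 := by rw [div_le_one h4pos]; exact hℓpow
    · ext t
      obtain ⟨i, j⟩ := t
      have := ProdBallsAux.blockScale N K x i (ru i).1 (ru i).2 (hruu i)
        (fun j' => by rw [hx]) j
      rw [this, ← hruy i j]
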